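/- Fix ρ > 0 and an integer k. The function α ↦ Z_k(α) := α²ρ²(1 − (−1)^{|k|}·e^{−αρπ}) / ((k² + α²ρ²)(1 − e^{−αρπ})) is monotone nondecreasing on (0, ∞), i.e. dZ_k/dα ≥ 0 for all α > 0. -/

import Mathlib

open Real

/-- The quantity `Z_k(α)` appearing in the stability analysis of the racetrack economy. -/
noncomputable def Zk (ρ : ℝ) (k : ℤ) (α : ℝ) : ℝ :=
  (α ^ 2 * ρ ^ 2 * (1 - (-1 : ℝ) ^ |k| * Real.exp (-(α * ρ * π)))) /
    (((k : ℝ) ^ 2 + α ^ 2 * ρ ^ 2) * (1 - Real.exp (-(α * ρ * π))))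

lemma exp_key (t : ℝ) (ht : 0 ≤ t) :
    Real.exp t * (2 * t + t ^ 3 / 3) ≤ Real.exp t ^ 2 - 1 := by
  have hP : 1 + t + t ^ 2 / 2 + t ^ 3 / 6 + t ^ 4 / 24 ≤ Real.exp t := by
    have h := Real.sum_le_exp_of_nonneg ht 5
    simp [Finset.sum_range_succ, Nat.factorial] at h
    linarith
  set X := Real.exp t with hX
  have h1 : 0 ≤ X - (1 + t + t ^ 2 / 2 + t ^ 3 / 6 + t ^ 4 / 24) := by linarith
  have h2 : 0 ≤ X + (1 + t + t ^ 2 / 2 + t ^ 3 / 6 + t ^ 4 / 24) - (2 * t + t ^ 3 / 3) := by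
    nlinarith [sq_nonneg t, sq_nonneg (t^2), pow_nonneg ht 3, pow_nonneg ht 4]
  nlinarith [mul_nonneg h1 h2, pow_nonneg ht 6, pow_nonneg ht 8]

lemma key_ineq (t : ℝ) (ht : 0 ≤ t) :
    Real.exp (-t) * (2 * t + t ^ 3 / 3) ≤ 1 - Real.exp (-t) ^ 2 := by
  have h := exp_key t ht
  have hpos : 0 < Real.exp t := Real.exp_pos t
  have hE : Real.exp (-t) = (Real.exp t)⁻¹ := Real.exp_neg t
  rw [hE, ← sub_nonneg]
  have heq : 1 - (Real.exp t)⁻¹ ^ 2 - (Real.exp t)⁻¹ * (2 * t + t ^ 3 / 3)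
      = (Real.exp t ^ 2 - 1 - Real.exp t * (2 * t + t ^ 3 / 3)) / Real.exp t ^ 2 := by
    field_simp
  rw [heq]
  exact div_nonneg (by linarith) (by positivity)

theorem Zk_monotone (ρ : ℝ) (hρ : 0 < ρ) (k : ℤ) :
    MonotoneOn (Zk ρ k) (Set.Ioi (0 : ℝ)) := by
  set c : ℝ := (-1 : ℝ) ^ |k| with hc
  -- c = 1 or c = -1, and if c = -1 then k ≠ 0
  have hcases : c = 1 ∨ (c = -1 ∧ 1 ≤ (k : ℝ) ^ 2) := by
    rcases Int.even_or_odd k with he | ho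
    · left
      rw [hc]
      have habs : Even |k| := by
        rcases abs_choice k with h | h <;> rw [h]
        · exact he
        · exact he.neg
      exact Even.neg_one_zpow habs
    · right
      constructor
      · rw [hc]
        exact Odd.neg_one_zpow (odd_abs.mpr ho)
      · have hk0 : k ≠ 0 := by rintro rfl; simp [Int.odd_iff] at ho
        have : (1 : ℝ) ≤ |(k : ℝ)| := by
          rw [← Int.cast_abs]
          exact_mod_cast Int.one_le_abs hk0
        nlinarith [abs_nonneg (k:ℝ), sq_abs (k:ℝ)]
  -- the derivative setup
  have key : ∀ α : ℝ, 0 < α → HasDerivAt (Zk ρ k)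
      (((2 * α * ρ ^ 2 * (1 - c * Real.exp (-(α * ρ * π)))
          + α ^ 2 * ρ ^ 2 * (c * (ρ * π) * Real.exp (-(α * ρ * π))))
        * (((k : ℝ) ^ 2 + α ^ 2 * ρ ^ 2) * (1 - Real.exp (-(α * ρ * π))))
        - (α ^ 2 * ρ ^ 2 * (1 - c * Real.exp (-(α * ρ * π))))
          * (2 * α * ρ ^ 2 * (1 - Real.exp (-(α * ρ * π)))
            + ((k : ℝ) ^ 2 + α ^ 2 * ρ ^ 2) * ((ρ * π) * Real.exp (-(α * ρ * π)))))
        / (((k : ℝ) ^ 2 + α ^ 2 * ρ ^ 2) * (1 - Real.exp (-(α * ρ * π)))) ^ 2) α := by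
    intro α hα
    have hE : HasDerivAt (fun x : ℝ => Real.exp (-(x * ρ * π)))
        (Real.exp (-(α * ρ * π)) * (-(1 * ρ * π))) α := by
      exact (((hasDerivAt_id α).mul_const ρ).mul_const π).neg.exp
    have hN : HasDerivAt (fun x : ℝ => x ^ 2 * ρ ^ 2 * (1 - c * Real.exp (-(x * ρ * π))))
        (2 * α * ρ ^ 2 * (1 - c * Real.exp (-(α * ρ * π)))
          + α ^ 2 * ρ ^ 2 * (c * (ρ * π) * Real.exp (-(α * ρ * π)))) α := by
      have h1 : HasDerivAt (fun x : ℝ => x ^ 2 * ρ ^ 2) (2 * α * ρ ^ 2) α := by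
        simpa using (hasDerivAt_pow 2 α).mul_const (ρ ^ 2)
      have h2 : HasDerivAt (fun x : ℝ => 1 - c * Real.exp (-(x * ρ * π)))
          (c * (ρ * π) * Real.exp (-(α * ρ * π))) α := by
        have := (hE.const_mul c).const_sub 1
        exact this.congr_deriv (by ring)
      have := h1.mul h2
      exact this.congr_deriv (by ring)
    have hD : HasDerivAt (fun x : ℝ => ((k : ℝ) ^ 2 + x ^ 2 * ρ ^ 2) * (1 - Real.exp (-(x * ρ * π))))
        (2 * α * ρ ^ 2 * (1 - Real.exp (-(α * ρ * π)))
          + ((k : ℝ) ^ 2 + α ^ 2 * ρ ^ 2) * ((ρ * π) * Real.exp (-(α * ρ * π)))) α := by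
      have h1 : HasDerivAt (fun x : ℝ => (k : ℝ) ^ 2 + x ^ 2 * ρ ^ 2) (2 * α * ρ ^ 2) α := by
        simpa using ((hasDerivAt_pow 2 α).mul_const (ρ ^ 2)).const_add ((k : ℝ) ^ 2)
      have h2 : HasDerivAt (fun x : ℝ => 1 - Real.exp (-(x * ρ * π)))
          ((ρ * π) * Real.exp (-(α * ρ * π))) α := by
        have := hE.const_sub 1
        exact this.congr_deriv (by ring)
      have := h1.mul h2
      exact this.congr_deriv (by ring)
    have hDne : (((k : ℝ) ^ 2 + α ^ 2 * ρ ^ 2) * (1 - Real.exp (-(α * ρ * π)))) ≠ 0 := by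
      have h1 : (0:ℝ) < (k : ℝ) ^ 2 + α ^ 2 * ρ ^ 2 := by positivity
      have h2 : Real.exp (-(α * ρ * π)) < 1 := by
        rw [Real.exp_lt_one_iff]
        have : 0 < α * ρ * π := by positivity
        linarith
      have : (0:ℝ) < ((k : ℝ) ^ 2 + α ^ 2 * ρ ^ 2) * (1 - Real.exp (-(α * ρ * π))) := by
        apply mul_pos h1; linarith
      exact ne_of_gt this
    have := hN.div hD hDne
    exact this
  apply monotoneOn_of_deriv_nonneg (convex_Ioi 0)
  · intro x hx
    exact ((key x hx).continuousAt).continuousWithinAt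
  · rw [interior_Ioi]
    intro x hx
    exact ((key x hx).differentiableAt).differentiableWithinAt
  · rw [interior_Ioi]
    intro α hα
    rw [Set.mem_Ioi] at hα
    rw [(key α hα).deriv]
    set E := Real.exp (-(α * ρ * π)) with hEdef
    have hEpos : 0 < E := Real.exp_pos _
    have hE1 : E < 1 := by
      rw [hEdef, Real.exp_lt_one_iff]
      have : 0 < α * ρ * π := by positivity
      linarith
    have hDpos : (0:ℝ) < (((k : ℝ) ^ 2 + α ^ 2 * ρ ^ 2) * (1 - E)) ^ 2 := by
      have h1 : (0:ℝ) < (k : ℝ) ^ 2 + α ^ 2 * ρ ^ 2 := by positivity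
      have : (0:ℝ) ≠ ((k : ℝ) ^ 2 + α ^ 2 * ρ ^ 2) * (1 - E) := by
        symm; apply ne_of_gt; apply mul_pos h1; linarith
      positivity
    apply div_nonneg _ (le_of_lt hDpos)
    rcases hcases with h1 | ⟨h1, hk1⟩
    · rw [h1]
      have : ((2 * α * ρ ^ 2 * (1 - 1 * E) + α ^ 2 * ρ ^ 2 * (1 * (ρ * π) * E))
            * (((k : ℝ) ^ 2 + α ^ 2 * ρ ^ 2) * (1 - E))
            - α ^ 2 * ρ ^ 2 * (1 - 1 * E)
              * (2 * α * ρ ^ 2 * (1 - E) + ((k : ℝ) ^ 2 + α ^ 2 * ρ ^ 2) * ((ρ * π) * E)))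
          = 2 * α * ρ ^ 2 * (1 - E) ^ 2 * (k : ℝ) ^ 2 := by ring
      rw [this]
      positivity
    · rw [h1]
      have hkey := key_ineq (α * ρ * π) (by positivity)
      rw [← hEdef] at hkey
      have ht : 0 < α * ρ * π := by positivity
      have heq : ((2 * α * ρ ^ 2 * (1 - (-1) * E) + α ^ 2 * ρ ^ 2 * ((-1) * (ρ * π) * E))
            * (((k : ℝ) ^ 2 + α ^ 2 * ρ ^ 2) * (1 - E))
            - α ^ 2 * ρ ^ 2 * (1 - (-1) * E)
              * (2 * α * ρ ^ 2 * (1 - E) + ((k : ℝ) ^ 2 + α ^ 2 * ρ ^ 2) * ((ρ * π) * E)))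
          = 2 * α * ρ ^ 2 * ((k : ℝ) ^ 2 * (1 - E ^ 2)
              - (α * ρ * π) * E * ((k : ℝ) ^ 2 + α ^ 2 * ρ ^ 2)) := by ring
      rw [heq]
      have harp : (0:ℝ) < 2 * α * ρ ^ 2 := by positivity
      apply mul_nonneg (le_of_lt harp)
      -- need: k^2 * (1 - E^2) ≥ s * E * (k^2 + α^2ρ^2), s = αρπ
      have hpi : (3:ℝ) < π ^ 2 := by nlinarith [Real.pi_gt_three]
      have hαρ2 : α ^ 2 * ρ ^ 2 = (α * ρ * π) ^ 2 / π ^ 2 := by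
        field_simp
      rw [hαρ2]
      set s := α * ρ * π with hs
      have hk0 : (0:ℝ) ≤ (k : ℝ) ^ 2 := sq_nonneg _
      have h2 : s ^ 3 / π ^ 2 ≤ s ^ 3 / 3 * (k : ℝ) ^ 2 := by
        have ha : s ^ 3 / π ^ 2 ≤ s ^ 3 / 3 := by
          apply div_le_div_of_nonneg_left (by positivity) (by norm_num) (le_of_lt hpi)
        have hb : s ^ 3 / 3 ≤ s ^ 3 / 3 * (k : ℝ) ^ 2 :=
          le_mul_of_one_le_right (by positivity) hk1
        linarith
      have h3 : E * (s * (k : ℝ) ^ 2 + s ^ 3 / π ^ 2) ≤ E * ((k : ℝ) ^ 2 * (2 * s + s ^ 3 / 3)) := by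
        apply mul_le_mul_of_nonneg_left _ (le_of_lt hEpos)
        have : (0:ℝ) ≤ s * (k : ℝ) ^ 2 := mul_nonneg (le_of_lt ht) hk0
        nlinarith
      have h4 : (k : ℝ) ^ 2 * (E * (2 * s + s ^ 3 / 3)) ≤ (k : ℝ) ^ 2 * (1 - E ^ 2) :=
        mul_le_mul_of_nonneg_left hkey hk0
      have h5 : s * E * ((k : ℝ) ^ 2 + s ^ 2 / π ^ 2) = E * (s * (k : ℝ) ^ 2 + s ^ 3 / π ^ 2) := by
        ring
      linarith [h3, h4, h5.le, h5.ge, (by ring_nf : E * ((k : ℝ) ^ 2 * (2 * s + s ^ 3 / 3)) = (k : ℝ) ^ 2 * (E * (2 * s + s ^ 3 / 3)))]
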